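/- Let 𝒢 = (𝒳, 𝒜, Q, V) be a k-player game, and suppose y ∈ 𝒳 and j ∈ [k] are such that y is the unique element of the support of Q whose j-th coordinate is y^j. Then there exists a predicate V' with: (a) V'(y, a) = V'(y, b) whenever a^{−j} = b^{−j}; (b) val(𝒢^{⊗n}) ≤ val(𝒢'^{⊗n}) for all n, where 𝒢' = (𝒳, 𝒜, Q, V'); and (c) val(𝒢') = val(𝒢). -/
import Mathlib


noncomputable section

/-- Value of a k-player game: supremum over deterministic product strategies of the
winning probability. -/
def gameVal {k : ℕ} {X A : Fin k → Type} [∀ j, Fintype (X j)] [∀ j, Fintype (A j)]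
    (Q : (∀ j, X j) → ℝ) (V : (∀ j, X j) → (∀ j, A j) → Bool) : ℝ :=
  ⨆ f : ∀ j, X j → A j, ∑ x, Q x * (if V x (fun j => f j (x j)) then (1:ℝ) else 0)

/-- Value of the n-fold parallel repetition of a k-player game. -/
def repVal {k : ℕ} {X A : Fin k → Type} [∀ j, Fintype (X j)] [∀ j, Fintype (A j)]
    (Q : (∀ j, X j) → ℝ) (V : (∀ j, X j) → (∀ j, A j) → Bool) (n : ℕ) : ℝ :=
  ⨆ F : ∀ j, (Fin n → X j) → (Fin n → A j),
    ∑ x : Fin n → ∀ j, X j,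
      (∏ i, Q (x i)) *
        (if ∀ i, V (x i) (fun j => F j (fun i' => x i' j) i) then (1:ℝ) else 0)

/-- If `y` is the unique support point of `Q` whose j-th coordinate is `y j`,
then there is a predicate `V'` that (a) on question `y` does not depend on player j's
answer, (b) dominates the parallel repetition value of `V` for all `n`, and (c) has the
same single-shot value as `V`. -/
theorem stmt_9 {k : ℕ} {X A : Fin k → Type} [∀ j, Fintype (X j)] [∀ j, Fintype (A j)]
    [∀ j, Nonempty (A j)] [∀ j, DecidableEq (X j)]
    (Q : (∀ j, X j) → ℝ) (hQ0 : ∀ x, 0 ≤ Q x) (hQ1 : ∑ x, Q x = 1)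
    (V : (∀ j, X j) → (∀ j, A j) → Bool)
    (y : ∀ j, X j) (j : Fin k) (hy : 0 < Q y)
    (huniq : ∀ x, 0 < Q x → x j = y j → x = y) :
    ∃ V' : (∀ j, X j) → (∀ j, A j) → Bool,
      (∀ a b : ∀ j', A j', (∀ j', j' ≠ j → a j' = b j') → V' y a = V' y b) ∧
      (∀ n, repVal Q V n ≤ repVal Q V' n) ∧
      gameVal Q V' = gameVal Q V := by
  classical
  set V' : (∀ j, X j) → (∀ j, A j) → Bool := fun x a =>
    if x = y then
      decide (∃ b : ∀ j', A j', (∀ j', j' ≠ j → b j' = a j') ∧ V y b = true)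
    else V x a with hV'
  have hVy : ∀ a, V' y a
      = decide (∃ b : ∀ j', A j', (∀ j', j' ≠ j → b j' = a j') ∧ V y b = true) := by
    intro a; simp [hV']
  have hmono : ∀ x a, V x a = true → V' x a = true := by
    intro x a h
    simp only [hV']
    split
    · next hxy =>
      subst hxy
      exact decide_eq_true ⟨a, fun _ _ => rfl, h⟩
    · exact h
  refine ⟨V', ?_, ?_, ?_⟩
  · -- (a)
    intro a b hab
    rw [hVy, hVy, decide_eq_decide]
    constructor
    · rintro ⟨c, hc, hcV⟩
      exact ⟨c, fun j' hj' => (hc j' hj').trans (hab j' hj'), hcV⟩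
    · rintro ⟨c, hc, hcV⟩
      exact ⟨c, fun j' hj' => (hc j' hj').trans (hab j' hj').symm, hcV⟩
  · -- (b)
    intro n
    unfold repVal
    apply ciSup_mono ((Set.finite_range _).bddAbove)
    intro F
    apply Finset.sum_le_sum
    intro x _
    have hp : 0 ≤ ∏ i, Q (x i) := Finset.prod_nonneg fun i _ => hQ0 _
    by_cases h : ∀ i, V (x i) (fun j => F j (fun i' => x i' j) i) = true
    · rw [if_pos h, if_pos (fun i => hmono _ _ (h i))]
    · rw [if_neg h, mul_zero]
      have h01 : (0:ℝ) ≤ (if ∀ i, V' (x i) (fun j => F j (fun i' => x i' j) i) then (1:ℝ) else 0) := by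
        split <;> norm_num
      exact mul_nonneg hp h01
  · -- (c)
    apply le_antisymm
    · unfold gameVal
      apply ciSup_le
      intro f
      by_cases hEx : ∃ b : ∀ j', A j',
          (∀ j', j' ≠ j → b j' = f j' (y j')) ∧ V y b = true
      · obtain ⟨b, hb, hbV⟩ := hEx
        set g : ∀ j', X j' → A j' := fun j' x => if x = y j' then b j' else f j' x with hg
        have key : ∑ x, Q x * (if V' x (fun j' => f j' (x j')) then (1:ℝ) else 0)
            ≤ ∑ x, Q x * (if V x (fun j' => g j' (x j')) then (1:ℝ) else 0) := by
          apply Finset.sum_le_sum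
          intro x _
          rcases eq_or_lt_of_le (hQ0 x) with h0 | h0
          · rw [← h0]; simp
          by_cases hxy : x = y
          · subst hxy
            have hgb : (fun j' => g j' (x j')) = b := by
              funext j'; simp [hg]
            rw [hgb, hbV, if_pos rfl, mul_one]
            have : (if V' x fun j' => f j' (x j') then (1:ℝ) else 0) ≤ 1 := by
              split <;> norm_num
            exact mul_le_of_le_one_right (hQ0 x) this
          · have hxj : x j ≠ y j := fun h => hxy (huniq x h0 h)
            have hans : (fun j' => g j' (x j')) = fun j' => f j' (x j') := by
              funext j'
              simp only [hg]
              split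
              · next heq =>
                by_cases hj' : j' = j
                · subst hj'; exact absurd heq hxj
                · rw [hb j' hj', heq]
              · rfl
            have hVV : V' x = V x := by simp [hV', hxy]
            rw [hans, hVV]
        refine key.trans ?_
        exact le_ciSup (f := fun f : ∀ j', X j' → A j' =>
          ∑ x, Q x * (if V x (fun j => f j (x j)) then (1:ℝ) else 0))
          ((Set.finite_range _).bddAbove) g
      · have key : ∑ x, Q x * (if V' x (fun j' => f j' (x j')) then (1:ℝ) else 0)
            ≤ ∑ x, Q x * (if V x (fun j' => f j' (x j')) then (1:ℝ) else 0) := by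
          apply Finset.sum_le_sum
          intro x _
          by_cases hxy : x = y
          · subst hxy
            have : V' x (fun j' => f j' (x j')) = false := by
              rw [hVy]
              exact decide_eq_false hEx
            rw [this]
            simp only [Bool.false_eq_true, if_false, mul_zero]
            have h01 : (0:ℝ) ≤ (if V x fun j' => f j' (x j') then (1:ℝ) else 0) := by
              split <;> norm_num
            exact mul_nonneg (hQ0 x) h01
          · have hVV : V' x = V x := by simp [hV', hxy]
            rw [hVV]
        refine key.trans ?_
        exact le_ciSup (f := fun f : ∀ j', X j' → A j' =>
          ∑ x, Q x * (if V x (fun j => f j (x j)) then (1:ℝ) else 0))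
          ((Set.finite_range _).bddAbove) f
    · unfold gameVal
      apply ciSup_mono ((Set.finite_range _).bddAbove)
      intro f
      apply Finset.sum_le_sum
      intro x _
      by_cases h : V x (fun j' => f j' (x j')) = true
      · rw [if_pos h, if_pos (hmono _ _ h)]
      · rw [if_neg h, mul_zero]
        have h01 : (0:ℝ) ≤ (if V' x fun j' => f j' (x j') then (1:ℝ) else 0) := by
          split <;> norm_num
        exact mul_nonneg (hQ0 x) h01
  

end
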